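/- Define a sequence x : ℕ → ℚ by x_1 = x_2 = ⋯ = x_6 = 1 and x_{n+6} = (x_{n+1} · x_{n+5} + x_{n+3}²)/x_n for n ≥ 1. Then every x_n is a positive integer. -/

import Mathlib

/-- Descent lemma: for the integer shadow of a Somos-6 sequence with unit initial
values, no prime divides three consecutive terms. -/
private lemma somos6_descent (y : ℕ → ℤ) (M : ℕ)
    (hone : ∀ i, 1 ≤ i → i ≤ 6 → y i = 1)
    (hRZ : ∀ k, 1 ≤ k → k + 6 ≤ M →
      y k * y (k + 6) = y (k + 1) * y (k + 5) + y (k + 3) ^ 2)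
    (p : ℤ) (hp : Prime p) :
    ∀ b, b + 3 ≤ M → p ∣ y (b + 1) → p ∣ y (b + 2) → p ∣ y (b + 3) → False := by
  intro b
  induction b using Nat.strong_induction_on with
  | _ b IH =>
    intro hbM hd1 hd2 hd3
    by_cases hb : b ≤ 5
    · have h1 : y (b + 1) = 1 := hone (b + 1) (by omega) (by omega)
      rw [h1] at hd1
      exact hp.not_unit (isUnit_of_dvd_one hd1)
    · obtain ⟨c, rfl⟩ : ∃ c, b = c + 6 := ⟨b - 6, by omega⟩
      have hd7 : p ∣ y (c + 7) := by rwa [show c + 6 + 1 = c + 7 by omega] at hd1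
      have hd8 : p ∣ y (c + 8) := by rwa [show c + 6 + 2 = c + 8 by omega] at hd2
      have hd9 : p ∣ y (c + 9) := by rwa [show c + 6 + 3 = c + 9 by omega] at hd3
      have h1 := hRZ (c + 3) (by omega) (by omega)
      rw [show c + 3 + 6 = c + 9 by omega, show c + 3 + 1 = c + 4 by omega,
          show c + 3 + 5 = c + 8 by omega, show c + 3 + 3 = c + 6 by omega] at h1
      have hd6 : p ∣ y (c + 6) := by
        have hsq : p ∣ y (c + 6) ^ 2 := by
          have e : y (c + 6) ^ 2 = y (c + 3) * y (c + 9) - y (c + 4) * y (c + 8) := by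
            linarith
          rw [e]
          exact dvd_sub (hd9.mul_left _) (hd8.mul_left _)
        exact hp.dvd_of_dvd_pow hsq
      have h2 := hRZ (c + 2) (by omega) (by omega)
      rw [show c + 2 + 6 = c + 8 by omega, show c + 2 + 1 = c + 3 by omega,
          show c + 2 + 5 = c + 7 by omega, show c + 2 + 3 = c + 5 by omega] at h2
      have hd5 : p ∣ y (c + 5) := by
        have hsq : p ∣ y (c + 5) ^ 2 := by
          have e : y (c + 5) ^ 2 = y (c + 2) * y (c + 8) - y (c + 3) * y (c + 7) := by
            linarith
          rw [e]
          exact dvd_sub (hd8.mul_left _) (hd7.mul_left _)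
        exact hp.dvd_of_dvd_pow hsq
      exact IH (c + 4) (by omega) (by omega)
        (by rwa [show c + 4 + 1 = c + 5 by omega])
        (by rwa [show c + 4 + 2 = c + 6 by omega])
        (by rwa [show c + 4 + 3 = c + 7 by omega])

/-- With six initial values equal to `1`, the Somos-6 recurrence
`x (n+6) = (x (n+1) * x (n+5) + x (n+3)^2) / x n` generates positive integers. -/
theorem stmt_8 (x : ℕ → ℚ)
    (h1 : x 1 = 1) (h2 : x 2 = 1) (h3 : x 3 = 1) (h4 : x 4 = 1) (h5 : x 5 = 1) (h6 : x 6 = 1)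
    (hrec : ∀ n, 1 ≤ n → x (n + 6) = (x (n + 1) * x (n + 5) + x (n + 3) ^ 2) / x n) :
    ∀ n, 1 ≤ n → ∃ k : ℤ, 0 < k ∧ x n = (k : ℚ) := by
  -- positivity
  have hpos : ∀ n, 1 ≤ n → 0 < x n := by
    intro n
    induction n using Nat.strong_induction_on with
    | _ n IH =>
      intro hn
      by_cases hc : n ≤ 6
      · interval_cases n <;> simp [h1, h2, h3, h4, h5, h6]
      · obtain ⟨m, rfl⟩ : ∃ m, n = m + 6 := ⟨n - 6, by omega⟩
        rw [hrec m (by omega)]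
        have p0 := IH m (by omega) (by omega)
        have p1 := IH (m + 1) (by omega) (by omega)
        have p3 := IH (m + 3) (by omega) (by omega)
        have p5 := IH (m + 5) (by omega) (by omega)
        exact div_pos (by nlinarith [sq_nonneg (x (m + 3))]) p0
  -- the multiplied-out recurrence
  have hR : ∀ n, 1 ≤ n → x n * x (n + 6) = x (n + 1) * x (n + 5) + x (n + 3) ^ 2 := by
    intro n hn
    rw [hrec n hn]
    field_simp [(hpos n hn).ne']
  -- explicit early values
  have v7 : x 7 = 2 := by
    have h := hrec 1 le_rfl; norm_num [h1, h2, h4, h6] at h; exact h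
  have v8 : x 8 = 3 := by
    have h := hrec 2 (by norm_num); norm_num [h2, h3, h5, v7] at h; exact h
  have v9 : x 9 = 4 := by
    have h := hrec 3 (by norm_num); norm_num [h3, h4, h6, v8] at h; exact h
  have v10 : x 10 = 8 := by
    have h := hrec 4 (by norm_num); norm_num [h4, h5, v7, v9] at h; exact h
  have v11 : x 11 = 17 := by
    have h := hrec 5 (by norm_num); norm_num [h5, h6, v8, v10] at h; exact h
  have v12 : x 12 = 50 := by
    have h := hrec 6 (by norm_num); norm_num [h6, v7, v9, v11] at h; exact h
  -- the gap-9 bilinear relation (conserved quantity K1 = 9)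
  have hE9 : ∀ n, 1 ≤ n → x n * x (n + 9) + x (n + 2) * x (n + 7)
      = x (n + 3) * x (n + 6) + 9 * (x (n + 4) * x (n + 5)) := by
    intro n hn
    induction n, hn using Nat.le_induction with
    | base => norm_num [h1, h3, h4, h5, h6, v7, v8, v10]
    | succ n hn ih =>
      have h0 := hR n hn
      have hA := hR (n + 1) (by omega)
      rw [show n + 1 + 6 = n + 7 by omega, show n + 1 + 1 = n + 2 by omega,
          show n + 1 + 5 = n + 6 by omega, show n + 1 + 3 = n + 4 by omega] at hA
      have hC := hR (n + 3) (by omega)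
      rw [show n + 3 + 6 = n + 9 by omega, show n + 3 + 1 = n + 4 by omega,
          show n + 3 + 5 = n + 8 by omega, show n + 3 + 3 = n + 6 by omega] at hC
      have hD := hR (n + 4) (by omega)
      rw [show n + 4 + 6 = n + 10 by omega, show n + 4 + 1 = n + 5 by omega,
          show n + 4 + 5 = n + 9 by omega, show n + 4 + 3 = n + 7 by omega] at hD
      rw [show n + 1 + 9 = n + 10 by omega, show n + 1 + 2 = n + 3 by omega,
          show n + 1 + 7 = n + 8 by omega, show n + 1 + 3 = n + 4 by omega,
          show n + 1 + 6 = n + 7 by omega, show n + 1 + 4 = n + 5 by omega,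
          show n + 1 + 5 = n + 6 by omega]
      apply mul_left_cancel₀ (hpos (n + 4) (by omega)).ne'
      linear_combination x (n + 6) * ih - x (n + 9) * h0 + x (n + 7) * hA
        - x (n + 3) * hC + x (n + 1) * hD
  -- the cubic relation (second conserved quantity)
  have hGC : ∀ n, 1 ≤ n → x n * (x (n + 5) * x (n + 7)) + x (n + 1) * (x (n + 3) * x (n + 8))
      + x (n + 2) * (x (n + 4) * x (n + 6)) + 3 * (x (n + 3) * (x (n + 4) * x (n + 5)))
      = x n * (x (n + 3) * x (n + 9)) + x (n + 2) ^ 2 * x (n + 8) := by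
    intro n hn
    induction n, hn using Nat.le_induction with
    | base => norm_num [h1, h2, h3, h4, h5, h6, v7, v8, v9, v10]
    | succ n hn ih =>
      have h0 := hR n hn
      have hA := hR (n + 1) (by omega)
      rw [show n + 1 + 6 = n + 7 by omega, show n + 1 + 1 = n + 2 by omega,
          show n + 1 + 5 = n + 6 by omega, show n + 1 + 3 = n + 4 by omega] at hA
      have hB := hR (n + 2) (by omega)
      rw [show n + 2 + 6 = n + 8 by omega, show n + 2 + 1 = n + 3 by omega,
          show n + 2 + 5 = n + 7 by omega, show n + 2 + 3 = n + 5 by omega] at hB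
      have hC := hR (n + 3) (by omega)
      rw [show n + 3 + 6 = n + 9 by omega, show n + 3 + 1 = n + 4 by omega,
          show n + 3 + 5 = n + 8 by omega, show n + 3 + 3 = n + 6 by omega] at hC
      have hD := hR (n + 4) (by omega)
      rw [show n + 4 + 6 = n + 10 by omega, show n + 4 + 1 = n + 5 by omega,
          show n + 4 + 5 = n + 9 by omega, show n + 4 + 3 = n + 7 by omega] at hD
      rw [show n + 1 + 5 = n + 6 by omega, show n + 1 + 7 = n + 8 by omega,
          show n + 1 + 1 = n + 2 by omega, show n + 1 + 3 = n + 4 by omega,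
          show n + 1 + 8 = n + 9 by omega, show n + 1 + 2 = n + 3 by omega,
          show n + 1 + 4 = n + 5 by omega, show n + 1 + 6 = n + 7 by omega,
          show n + 1 + 9 = n + 10 by omega]
      apply mul_left_cancel₀ (hpos (n + 3) (by omega)).ne'
      linear_combination x (n + 6) * ih + (x (n + 3) * x (n + 9) - x (n + 5) * x (n + 7)) * h0
        - x (n + 2) * x (n + 8) * hA + x (n + 1) * x (n + 7) * hB
        + x (n + 2) * x (n + 4) * hC - x (n + 1) * x (n + 3) * hD
  -- the gap-10 bilinear relation
  have hE10 : ∀ n, 1 ≤ n → x n * x (n + 10) + 3 * (x (n + 3) * x (n + 7))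
      + 9 * (x (n + 4) * x (n + 6))
      = x (n + 1) * x (n + 9) + 9 * (x (n + 2) * x (n + 8)) := by
    intro n hn
    have h0 := hR n hn
    have hA := hR (n + 1) (by omega)
    rw [show n + 1 + 6 = n + 7 by omega, show n + 1 + 1 = n + 2 by omega,
        show n + 1 + 5 = n + 6 by omega, show n + 1 + 3 = n + 4 by omega] at hA
    have hB := hR (n + 2) (by omega)
    rw [show n + 2 + 6 = n + 8 by omega, show n + 2 + 1 = n + 3 by omega,
        show n + 2 + 5 = n + 7 by omega, show n + 2 + 3 = n + 5 by omega] at hB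
    have hC := hR (n + 3) (by omega)
    rw [show n + 3 + 6 = n + 9 by omega, show n + 3 + 1 = n + 4 by omega,
        show n + 3 + 5 = n + 8 by omega, show n + 3 + 3 = n + 6 by omega] at hC
    have hD := hR (n + 4) (by omega)
    rw [show n + 4 + 6 = n + 10 by omega, show n + 4 + 1 = n + 5 by omega,
        show n + 4 + 5 = n + 9 by omega, show n + 4 + 3 = n + 7 by omega] at hD
    have hE9n := hE9 n hn
    have hGCn := hGC n hn
    have hx : x (n + 4) * x (n + 5) ≠ 0 :=
      mul_ne_zero (hpos (n + 4) (by omega)).ne' (hpos (n + 5) (by omega)).ne'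
    apply mul_left_cancel₀ hx
    linear_combination (x (n + 4) * x (n + 9)) * h0 - (x (n + 3) * x (n + 8)) * hA
      - (x n * x (n + 9)) * hB + (x (n + 3) * x (n + 4)) * hC + (x n * x (n + 5)) * hD
      + (x (n + 2) * x (n + 8) - x (n + 4) * x (n + 6)) * hE9n + x (n + 7) * hGCn
  -- the gap-11 bilinear relation
  have hE11 : ∀ n, 1 ≤ n → x n * x (n + 11)
      = x (n + 2) * x (n + 9) + 9 * (x (n + 3) * x (n + 8)) + 3 * (x (n + 5) * x (n + 6)) := by
    intro n hn
    have h0 := hR n hn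
    have hB := hR (n + 2) (by omega)
    rw [show n + 2 + 6 = n + 8 by omega, show n + 2 + 1 = n + 3 by omega,
        show n + 2 + 5 = n + 7 by omega, show n + 2 + 3 = n + 5 by omega] at hB
    have hC := hR (n + 3) (by omega)
    rw [show n + 3 + 6 = n + 9 by omega, show n + 3 + 1 = n + 4 by omega,
        show n + 3 + 5 = n + 8 by omega, show n + 3 + 3 = n + 6 by omega] at hC
    have hD := hR (n + 4) (by omega)
    rw [show n + 4 + 6 = n + 10 by omega, show n + 4 + 1 = n + 5 by omega,
        show n + 4 + 5 = n + 9 by omega, show n + 4 + 3 = n + 7 by omega] at hD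
    have hE := hR (n + 5) (by omega)
    rw [show n + 5 + 6 = n + 11 by omega, show n + 5 + 1 = n + 6 by omega,
        show n + 5 + 5 = n + 10 by omega, show n + 5 + 3 = n + 8 by omega] at hE
    have hE9n := hE9 n hn
    have hGC1 := hGC (n + 1) (by omega)
    rw [show n + 1 + 5 = n + 6 by omega, show n + 1 + 7 = n + 8 by omega,
        show n + 1 + 1 = n + 2 by omega, show n + 1 + 3 = n + 4 by omega,
        show n + 1 + 8 = n + 9 by omega, show n + 1 + 2 = n + 3 by omega,
        show n + 1 + 4 = n + 5 by omega, show n + 1 + 6 = n + 7 by omega,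
        show n + 1 + 9 = n + 10 by omega] at hGC1
    have hx : x (n + 4) * x (n + 5) ≠ 0 :=
      mul_ne_zero (hpos (n + 4) (by omega)).ne' (hpos (n + 5) (by omega)).ne'
    apply mul_left_cancel₀ hx
    linear_combination (x (n + 5) * x (n + 9) - x (n + 6) * x (n + 8) + x (n + 7) ^ 2) * h0
      - (x (n + 3) * x (n + 7)) * hB - (x n * x (n + 8)) * hC
      + (x n * x (n + 6) - x (n + 1) * x (n + 5)) * hD + (x n * x (n + 4)) * hE
      + (x (n + 3) * x (n + 8)) * hE9n - x (n + 5) * hGC1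
  -- main strong induction
  intro N
  induction N using Nat.strong_induction_on with
  | _ N IH =>
    intro hN
    by_cases hsmall : N ≤ 12
    · interval_cases N
      · exact ⟨1, one_pos, by rw [h1]; norm_num⟩
      · exact ⟨1, one_pos, by rw [h2]; norm_num⟩
      · exact ⟨1, one_pos, by rw [h3]; norm_num⟩
      · exact ⟨1, one_pos, by rw [h4]; norm_num⟩
      · exact ⟨1, one_pos, by rw [h5]; norm_num⟩
      · exact ⟨1, one_pos, by rw [h6]; norm_num⟩
      · exact ⟨2, by norm_num, by rw [v7]; norm_num⟩
      · exact ⟨3, by norm_num, by rw [v8]; norm_num⟩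
      · exact ⟨4, by norm_num, by rw [v9]; norm_num⟩
      · exact ⟨8, by norm_num, by rw [v10]; norm_num⟩
      · exact ⟨17, by norm_num, by rw [v11]; norm_num⟩
      · exact ⟨50, by norm_num, by rw [v12]; norm_num⟩
    · -- N ≥ 13
      have hN13 : 13 ≤ N := by omega
      have H : ∀ i, ∃ k : ℤ, 0 < k ∧ (1 ≤ i → i < N → x i = (k : ℚ)) := by
        intro i
        by_cases hi : 1 ≤ i ∧ i < N
        · obtain ⟨k, hk, he⟩ := IH i hi.2 hi.1
          exact ⟨k, hk, fun _ _ => he⟩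
        · exact ⟨1, one_pos, fun hA hB => absurd ⟨hA, hB⟩ hi⟩
      choose y hypos hyval using H
      have hyone : ∀ i, 1 ≤ i → i ≤ 6 → y i = 1 := by
        intro i hi1 hi6
        have hv := hyval i hi1 (by omega)
        have hxi : x i = 1 := by interval_cases i <;> assumption
        have hcast : ((y i : ℤ) : ℚ) = 1 := by rw [← hv, hxi]
        exact_mod_cast hcast
      have hRZ : ∀ k, 1 ≤ k → k + 6 ≤ N - 1 →
          y k * y (k + 6) = y (k + 1) * y (k + 5) + y (k + 3) ^ 2 := by
        intro k hk hk6
        have hq := hR k hk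
        rw [hyval k hk (by omega), hyval (k + 6) (by omega) (by omega),
            hyval (k + 1) (by omega) (by omega), hyval (k + 5) (by omega) (by omega),
            hyval (k + 3) (by omega) (by omega)] at hq
        exact_mod_cast hq
      -- three expressions for x N with consecutive denominators
      have h11 := hE11 (N - 11) (by omega)
      rw [show N - 11 + 11 = N by omega, show N - 11 + 2 = N - 9 by omega,
          show N - 11 + 9 = N - 2 by omega, show N - 11 + 3 = N - 8 by omega,
          show N - 11 + 8 = N - 3 by omega, show N - 11 + 5 = N - 6 by omega,
          show N - 11 + 6 = N - 5 by omega] at h11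
      rw [hyval (N - 11) (by omega) (by omega), hyval (N - 9) (by omega) (by omega),
          hyval (N - 2) (by omega) (by omega), hyval (N - 8) (by omega) (by omega),
          hyval (N - 3) (by omega) (by omega), hyval (N - 6) (by omega) (by omega),
          hyval (N - 5) (by omega) (by omega)] at h11
      have h10 := hE10 (N - 10) (by omega)
      rw [show N - 10 + 10 = N by omega, show N - 10 + 3 = N - 7 by omega,
          show N - 10 + 7 = N - 3 by omega, show N - 10 + 4 = N - 6 by omega,
          show N - 10 + 6 = N - 4 by omega, show N - 10 + 1 = N - 9 by omega,
          show N - 10 + 9 = N - 1 by omega, show N - 10 + 2 = N - 8 by omega,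
          show N - 10 + 8 = N - 2 by omega] at h10
      rw [hyval (N - 10) (by omega) (by omega), hyval (N - 7) (by omega) (by omega),
          hyval (N - 3) (by omega) (by omega), hyval (N - 6) (by omega) (by omega),
          hyval (N - 4) (by omega) (by omega), hyval (N - 9) (by omega) (by omega),
          hyval (N - 1) (by omega) (by omega), hyval (N - 8) (by omega) (by omega),
          hyval (N - 2) (by omega) (by omega)] at h10
      have h9 := hE9 (N - 9) (by omega)
      rw [show N - 9 + 9 = N by omega, show N - 9 + 2 = N - 7 by omega,
          show N - 9 + 7 = N - 2 by omega, show N - 9 + 3 = N - 6 by omega,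
          show N - 9 + 6 = N - 3 by omega, show N - 9 + 4 = N - 5 by omega,
          show N - 9 + 5 = N - 4 by omega] at h9
      rw [hyval (N - 9) (by omega) (by omega), hyval (N - 7) (by omega) (by omega),
          hyval (N - 2) (by omega) (by omega), hyval (N - 6) (by omega) (by omega),
          hyval (N - 3) (by omega) (by omega), hyval (N - 5) (by omega) (by omega),
          hyval (N - 4) (by omega) (by omega)] at h9
      -- gcd of the three consecutive denominators is 1
      have hg : Int.gcd ((Int.gcd (y (N - 11)) (y (N - 10)) : ℤ)) (y (N - 9)) = 1 := by
        by_contra hne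
        obtain ⟨p, hp, hpd⟩ := Nat.exists_prime_and_dvd hne
        have hpZ : Prime (p : ℤ) := by
          rw [Int.prime_iff_natAbs_prime]; simpa using hp
        have t0 : ((Int.gcd ((Int.gcd (y (N - 11)) (y (N - 10)) : ℤ)) (y (N - 9)) : ℤ))
            ∣ (Int.gcd (y (N - 11)) (y (N - 10)) : ℤ) := Int.gcd_dvd_left _ _
        have t0' : ((Int.gcd ((Int.gcd (y (N - 11)) (y (N - 10)) : ℤ)) (y (N - 9)) : ℤ))
            ∣ y (N - 9) := Int.gcd_dvd_right _ _
        have hpg : (p : ℤ) ∣ ((Int.gcd ((Int.gcd (y (N - 11)) (y (N - 10)) : ℤ)) (y (N - 9)) : ℤ)) :=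
          Int.natCast_dvd_natCast.mpr hpd
        have hd1 : (p : ℤ) ∣ y (N - 11) :=
          dvd_trans (dvd_trans hpg t0) (Int.gcd_dvd_left _ _)
        have hd2 : (p : ℤ) ∣ y (N - 10) :=
          dvd_trans (dvd_trans hpg t0) (Int.gcd_dvd_right _ _)
        have hd3 : (p : ℤ) ∣ y (N - 9) := dvd_trans hpg t0'
        exact somos6_descent y (N - 1) hyone hRZ (p : ℤ) hpZ (N - 12) (by omega)
          (by rwa [show N - 12 + 1 = N - 11 by omega])
          (by rwa [show N - 12 + 2 = N - 10 by omega])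
          (by rwa [show N - 12 + 3 = N - 9 by omega])
      -- Bezout
      obtain ⟨s, t, e1⟩ : ∃ s t, ((Int.gcd (y (N - 11)) (y (N - 10)) : ℤ))
          = y (N - 11) * s + y (N - 10) * t :=
        ⟨_, _, Int.gcd_eq_gcd_ab _ _⟩
      obtain ⟨u, v, e2⟩ : ∃ u v, (1 : ℤ)
          = ((Int.gcd (y (N - 11)) (y (N - 10)) : ℤ)) * u + y (N - 9) * v := by
        refine ⟨Int.gcdA ((Int.gcd (y (N - 11)) (y (N - 10)) : ℤ)) (y (N - 9)),
          Int.gcdB ((Int.gcd (y (N - 11)) (y (N - 10)) : ℤ)) (y (N - 9)), ?_⟩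
        have h := Int.gcd_eq_gcd_ab ((Int.gcd (y (N - 11)) (y (N - 10)) : ℤ)) (y (N - 9))
        rw [hg] at h
        exact_mod_cast h
      have ebez : (1 : ℤ) = y (N - 11) * (s * u) + y (N - 10) * (t * u) + y (N - 9) * v := by
        rw [e2, e1]; ring
      have ebezQ : (1 : ℚ) = (y (N - 11) : ℚ) * ((s : ℚ) * (u : ℚ))
          + (y (N - 10) : ℚ) * ((t : ℚ) * (u : ℚ)) + (y (N - 9) : ℚ) * (v : ℚ) := by
        exact_mod_cast ebez
      refine ⟨(y (N - 9) * y (N - 2) + 9 * (y (N - 8) * y (N - 3))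
          + 3 * (y (N - 6) * y (N - 5))) * (s * u)
        + (y (N - 9) * y (N - 1) + 9 * (y (N - 8) * y (N - 2))
          - 3 * (y (N - 7) * y (N - 3)) - 9 * (y (N - 6) * y (N - 4))) * (t * u)
        + (y (N - 6) * y (N - 3) + 9 * (y (N - 5) * y (N - 4))
          - y (N - 7) * y (N - 2)) * v, ?_, ?_⟩
      case _ =>
        have heq : x N = (((y (N - 9) * y (N - 2) + 9 * (y (N - 8) * y (N - 3))
            + 3 * (y (N - 6) * y (N - 5))) * (s * u)
          + (y (N - 9) * y (N - 1) + 9 * (y (N - 8) * y (N - 2))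
            - 3 * (y (N - 7) * y (N - 3)) - 9 * (y (N - 6) * y (N - 4))) * (t * u)
          + (y (N - 6) * y (N - 3) + 9 * (y (N - 5) * y (N - 4))
            - y (N - 7) * y (N - 2)) * v : ℤ) : ℚ) := by
          push_cast
          linear_combination ((s : ℚ) * (u : ℚ)) * h11 + ((t : ℚ) * (u : ℚ)) * h10
            + (v : ℚ) * h9 + x N * ebezQ
        have hxN := hpos N (by omega)
        rw [heq] at hxN
        exact_mod_cast hxN
      case _ =>
        push_cast
        linear_combination ((s : ℚ) * (u : ℚ)) * h11 + ((t : ℚ) * (u : ℚ)) * h10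
          + (v : ℚ) * h9 + x N * ebezQ
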